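/- Let z ∈ ℂ with z ∉ ℝ. Suppose u = (u₁, u₂) ∈ ℂ² is a nonzero vector with Φ(z)·u = w·u and v = (v₁, v₂) ∈ ℂ² is a nonzero vector with vᵀ·Φ(z) = w·vᵀ (i.e., u is a right eigenvector and v a left eigenvector of Φ(z), both associated with the same eigenvalue w ∈ ℂ). Then Im(u₁ · conj(u₂)) · Im(v₁ · conj(v₂) / z) > 0. -/

import Mathlib

open Matrix Filter Complex

/-- The odd transition matrix `φ_{2i-1}(z) = [[1, α⁻¹z⁻¹],[α, 1]]`. -/
noncomputable def phiOdd (a z : ℂ) : Matrix (Fin 2) (Fin 2) ℂ :=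
  !![1, a⁻¹ * z⁻¹; a, 1]

/-- The even transition matrix `φ_{2i}(z) = (1 - z⁻¹)⁻¹ • [[1, β⁻¹z⁻¹],[β, 1]]`. -/
noncomputable def phiEven (b z : ℂ) : Matrix (Fin 2) (Fin 2) ℂ :=
  (1 - z⁻¹)⁻¹ • !![1, b⁻¹ * z⁻¹; b, 1]

/-- The ordered product `Φ(z) = φ₁(z) φ₂(z) ⋯ φ_{2ℓ}(z)`, with the weights
`α_i, β_i` (for `i = 1, …, ℓ`) of the (2×ℓ)-periodic Aztec diamond. -/
noncomputable def Phi (ℓ : ℕ) (α β : ℕ → ℝ) (z : ℂ) : Matrix (Fin 2) (Fin 2) ℂ :=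
  ((List.range ℓ).map (fun i => phiOdd (α (i + 1)) z * phiEven (β (i + 1)) z)).prod

namespace Aztec7

noncomputable def NN (b : ℝ) (z : ℂ) : Matrix (Fin 2) (Fin 2) ℂ :=
  !![1, (b:ℂ)⁻¹ * z⁻¹; (b:ℂ), 1]

noncomputable def gen (z : ℂ) (p : ℝ × Bool) : Matrix (Fin 2) (Fin 2) ℂ :=
  (if p.2 then (1 - z⁻¹)⁻¹ else 1 : ℂ) • NN p.1 z

noncomputable def sc (z : ℂ) (p : ℝ × Bool) : ℝ :=
  if p.2 then Complex.normSq ((1 - z⁻¹)⁻¹) else 1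

noncomputable def prodM (z : ℂ) (L : List (ℝ × Bool)) : Matrix (Fin 2) (Fin 2) ℂ :=
  (L.map (gen z)).prod

noncomputable def scP (z : ℂ) (L : List (ℝ × Bool)) : ℝ :=
  (L.map (sc z)).prod

noncomputable def qf (t : ℂ) (x : Fin 2 → ℂ) : ℝ :=
  ((starRingEnd ℂ) t * (x 0 * (starRingEnd ℂ) (x 1))).im

noncomputable def fz (z t : ℂ) : ℂ := t - (starRingEnd ℂ) t * z⁻¹

def Ematrix : Matrix (Fin 2) (Fin 2) ℂ := !![1, 0; 0, -1]

noncomputable def Dmatrix (z : ℂ) : Matrix (Fin 2) (Fin 2) ℂ := !![1, 0; 0, z]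

def flipP (p : ℝ × Bool) : ℝ × Bool := (p.1, !p.2)
noncomputable def invP (p : ℝ × Bool) : ℝ × Bool := (p.1⁻¹, p.2)

lemma imc (w : ℂ) : (w.im : ℂ) = (w - (starRingEnd ℂ) w) / (2 * I) := by
  rw [Complex.sub_conj]
  push_cast
  rw [mul_comm]
  field_simp [Complex.I_ne_zero]

lemma mulVec0 (b : ℝ) (z : ℂ) (x : Fin 2 → ℂ) :
    (NN b z *ᵥ x) 0 = x 0 + (b:ℂ)⁻¹ * z⁻¹ * x 1 := by
  simp [NN, Matrix.mulVec, dotProduct, Fin.sum_univ_two]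

lemma mulVec1 (b : ℝ) (z : ℂ) (x : Fin 2 → ℂ) :
    (NN b z *ᵥ x) 1 = (b:ℂ) * x 0 + x 1 := by
  simp [NN, Matrix.mulVec, dotProduct, Fin.sum_univ_two]

lemma step (b : ℝ) (hb : b ≠ 0) (z : ℂ) (hz : z ≠ 0) (t : ℂ) (x : Fin 2 → ℂ) :
    qf t (NN b z *ᵥ x) = qf (fz z t) x - b * t.im * normSq (x 0)
      - (t * ((starRingEnd ℂ) z)⁻¹).im * b⁻¹ * normSq (x 1) := by
  have hzc : (starRingEnd ℂ) z ≠ 0 := by simpa using hz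
  have hbc : (b : ℂ) ≠ 0 := by exact_mod_cast hb
  apply Complex.ofReal_injective
  unfold qf
  rw [mulVec0, mulVec1]
  push_cast [imc, ← Complex.mul_conj]
  simp only [_root_.map_mul, _root_.map_add, _root_.map_sub, map_inv₀, Complex.conj_conj,
    Complex.conj_ofReal, fz, _root_.map_one]
  have hI : (2 : ℂ) * I ≠ 0 := by simp [Complex.I_ne_zero]
  field_simp [hbc, hz, hzc, Complex.I_ne_zero]
  ring

lemma fz_im (z t : ℂ) : (fz z t).im = t.im + (t * ((starRingEnd ℂ) z)⁻¹).im := by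
  have h : (starRingEnd ℂ) (t * ((starRingEnd ℂ) z)⁻¹) = (starRingEnd ℂ) t * z⁻¹ := by
    simp [_root_.map_mul, map_inv₀]
  rw [fz, Complex.sub_im, ← h, Complex.conj_im]
  ring

lemma fz_im2 (z : ℂ) (hz : z ≠ 0) (t : ℂ) :
    (fz z t * ((starRingEnd ℂ) z)⁻¹).im
      = (t * ((starRingEnd ℂ) z)⁻¹).im + t.im / normSq z := by
  have hzc : (starRingEnd ℂ) z ≠ 0 := by simpa using hz
  apply Complex.ofReal_injective
  push_cast [imc]
  simp only [fz, _root_.map_mul, _root_.map_sub, map_inv₀, Complex.conj_conj]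
  rw [Complex.normSq_eq_conj_mul_self]
  field_simp [hz, hzc, Complex.I_ne_zero]
  ring

lemma qf_smul (t c : ℂ) (y : Fin 2 → ℂ) :
    qf t (c • y) = normSq c * qf t y := by
  have h : (c • y) 0 * (starRingEnd ℂ) ((c • y) 1)
      = ((normSq c : ℝ) : ℂ) * (y 0 * (starRingEnd ℂ) (y 1)) := by
    rw [← Complex.mul_conj]
    simp only [Pi.smul_apply, smul_eq_mul, _root_.map_mul]
    ring
  rw [qf, h, qf, mul_left_comm, Complex.mul_im]
  simp

lemma qf_E (t : ℂ) (x : Fin 2 → ℂ) : qf t (Ematrix *ᵥ x) = - qf t x := by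
  have h0 : (Ematrix *ᵥ x) 0 = x 0 := by
    simp [Ematrix, Matrix.mulVec, dotProduct, Fin.sum_univ_two]
  have h1 : (Ematrix *ᵥ x) 1 = - x 1 := by
    simp [Ematrix, Matrix.mulVec, dotProduct, Fin.sum_univ_two]
  rw [qf, h0, h1, qf]
  simp [Complex.mul_im]

lemma sc_pos (z : ℂ) (hz : z.im ≠ 0) (p : ℝ × Bool) : 0 < sc z p := by
  have hz1 : (1 : ℂ) - z⁻¹ ≠ 0 := by
    intro h
    have : z⁻¹ = 1 := by linear_combination -h
    have : z = 1 := by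
      have hz0 : z ≠ 0 := fun h0 => by simp [h0] at this
      field_simp at this
      simpa using this.symm
    simp [this] at hz
  rcases p with ⟨b, e⟩
  cases e <;> simp [sc, Complex.normSq_pos, hz1]

lemma gen_step (z : ℂ) (hz : z ≠ 0) (p : ℝ × Bool) (hb : p.1 ≠ 0) (t : ℂ) (x : Fin 2 → ℂ) :
    qf t (gen z p *ᵥ x) = sc z p * (qf (fz z t) x - p.1 * t.im * normSq (x 0)
      - (t * ((starRingEnd ℂ) z)⁻¹).im * p.1⁻¹ * normSq (x 1)) := by
  rw [gen, Matrix.smul_mulVec, qf_smul, step p.1 hb z hz, sc]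
  rcases p with ⟨b, e⟩
  cases e <;> simp

/-- Weak invariance of the cone under `fz`. -/
lemma fz_inv (z : ℂ) (hz : z ≠ 0) (t : ℂ)
    (h1 : 0 ≤ t.im * z.im) (h2 : 0 ≤ (t * ((starRingEnd ℂ) z)⁻¹).im * z.im) :
    0 ≤ (fz z t).im * z.im ∧ 0 ≤ (fz z t * ((starRingEnd ℂ) z)⁻¹).im * z.im := by
  constructor
  · rw [fz_im]; nlinarith
  · rw [fz_im2 z hz]
    have hns : 0 < normSq z := normSq_pos.mpr hz
    have : 0 ≤ t.im / normSq z * z.im := by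
      rw [div_mul_eq_mul_div]
      exact div_nonneg h1 hns.le
    nlinarith

lemma weak (z : ℂ) (hz : z.im ≠ 0) (L : List (ℝ × Bool)) (hL : ∀ p ∈ L, 0 < p.1)
    (t : ℂ) (x : Fin 2 → ℂ)
    (h1 : 0 ≤ t.im * z.im) (h2 : 0 ≤ (t * ((starRingEnd ℂ) z)⁻¹).im * z.im) :
    qf t (prodM z L *ᵥ x) * z.im ≤ scP z L * (qf ((fz z)^[L.length] t) x * z.im) := by
  induction L generalizing t with
  | nil => simp [prodM, scP]
  | cons p L ih =>
    have hz0 : z ≠ 0 := fun h => by simp [h] at hz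
    have hp : 0 < p.1 := hL p (by simp)
    have hstep := gen_step z hz0 p hp.ne' t (prodM z L *ᵥ x)
    have hMV : prodM z (p :: L) *ᵥ x = gen z p *ᵥ (prodM z L *ᵥ x) := by
      rw [prodM, List.map_cons, List.prod_cons, ← Matrix.mulVec_mulVec]; rfl
    rw [hMV, hstep]
    have hd : 0 ≤ (p.1 * t.im * normSq ((prodM z L *ᵥ x) 0)
        + (t * ((starRingEnd ℂ) z)⁻¹).im * p.1⁻¹ * normSq ((prodM z L *ᵥ x) 1)) * z.im := by
      have n0 : 0 ≤ normSq ((prodM z L *ᵥ x) 0) := normSq_nonneg _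
      have n1 : 0 ≤ normSq ((prodM z L *ᵥ x) 1) := normSq_nonneg _
      have hpi : 0 < p.1⁻¹ := inv_pos.mpr hp
      have hA : 0 ≤ p.1 * (t.im * z.im) * normSq ((prodM z L *ᵥ x) 0) :=
        mul_nonneg (mul_nonneg hp.le h1) n0
      have hB : 0 ≤ (t * ((starRingEnd ℂ) z)⁻¹).im * z.im * p.1⁻¹ * normSq ((prodM z L *ᵥ x) 1) :=
        mul_nonneg (mul_nonneg h2 hpi.le) n1
      nlinarith [hA, hB]
    have hsc : 0 < sc z p := sc_pos z hz p
    obtain ⟨h1', h2'⟩ := fz_inv z hz0 t h1 h2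
    have hih := ih (fun q hq => hL q (by simp [hq])) (fz z t) h1' h2'
    have hlen : (p :: L).length = L.length + 1 := rfl
    rw [hlen, Function.iterate_succ_apply]
    have hscP : scP z (p :: L) = sc z p * scP z L := by
      rw [scP, List.map_cons, List.prod_cons]; rfl
    rw [hscP]
    calc sc z p * (qf (fz z t) (prodM z L *ᵥ x) - p.1 * t.im * normSq ((prodM z L *ᵥ x) 0)
          - (t * ((starRingEnd ℂ) z)⁻¹).im * p.1⁻¹ * normSq ((prodM z L *ᵥ x) 1)) * z.im
        ≤ sc z p * (qf (fz z t) (prodM z L *ᵥ x) * z.im) := by nlinarith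
      _ ≤ sc z p * (scP z L * (qf ((fz z)^[L.length] (fz z t)) x * z.im)) := by
          exact mul_le_mul_of_nonneg_left hih hsc.le
      _ = sc z p * scP z L * (qf ((fz z)^[L.length] (fz z t)) x * z.im) := by ring

lemma one_sub_inv_ne (z : ℂ) (hz : z.im ≠ 0) : (1:ℂ) - z⁻¹ ≠ 0 := by
  intro h
  have h1 : z⁻¹ = 1 := by linear_combination -h
  have hz0 : z ≠ 0 := fun h0 => by simp [h0] at h1
  have : z = 1 := by
    field_simp at h1
    simpa using h1.symm
  simp [this] at hz

lemma det_gen (z : ℂ) (hz : z.im ≠ 0) (p : ℝ × Bool) (hb : p.1 ≠ 0) :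
    IsUnit (gen z p).det := by
  have hbc : (p.1 : ℂ) ≠ 0 := by exact_mod_cast hb
  have hdetN : (NN p.1 z).det = 1 - z⁻¹ := by
    rw [NN, Matrix.det_fin_two_of, mul_comm ((p.1:ℂ)⁻¹ * z⁻¹), ← mul_assoc,
      mul_inv_cancel₀ hbc, one_mul, one_mul]
  rw [gen, Matrix.det_smul, hdetN]
  rw [isUnit_iff_ne_zero]
  rcases p with ⟨b, e⟩
  have h1 := one_sub_inv_ne z hz
  cases e <;> simp_all [pow_ne_zero]

lemma gen_unit (z : ℂ) (hz : z.im ≠ 0) (p : ℝ × Bool) (hb : p.1 ≠ 0) :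
    IsUnit (gen z p) := by
  rw [Matrix.isUnit_iff_isUnit_det]
  exact det_gen z hz p hb

lemma prodM_unit (z : ℂ) (hz : z.im ≠ 0) (L : List (ℝ × Bool)) (hL : ∀ p ∈ L, p.1 ≠ 0) :
    IsUnit (prodM z L) := by
  induction L with
  | nil => simp [prodM]
  | cons p L ih =>
    rw [prodM, List.map_cons, List.prod_cons]
    exact (gen_unit z hz p (hL p (by simp))).mul (ih (fun q hq => hL q (by simp [hq])))

lemma mulVec_ne (M : Matrix (Fin 2) (Fin 2) ℂ) (hM : IsUnit M) (x : Fin 2 → ℂ) (hx : x ≠ 0) :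
    M *ᵥ x ≠ 0 := by
  intro h0
  apply hx
  have hdet : IsUnit M.det := (Matrix.isUnit_iff_isUnit_det M).mp hM
  have hinv : M⁻¹ * M = 1 := Matrix.nonsing_inv_mul M hdet
  have : M⁻¹ *ᵥ (M *ᵥ x) = x := by rw [Matrix.mulVec_mulVec, hinv, Matrix.one_mulVec]
  rw [h0] at this
  rw [← this]
  simp

lemma strict (z : ℂ) (hz : z.im ≠ 0) (L : List (ℝ × Bool)) (hL : ∀ p ∈ L, 0 < p.1)
    (hlen : 2 ≤ L.length) (x : Fin 2 → ℂ) (hx : x ≠ 0) :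
    qf 1 (prodM z L *ᵥ x) * z.im < scP z L * (qf ((fz z)^[L.length] 1) x * z.im) := by
  have hz0 : z ≠ 0 := fun h => by simp [h] at hz
  have hns : 0 < normSq z := normSq_pos.mpr hz0
  match L, hlen with
  | p₁ :: p₂ :: L2, _ =>
  have hp₁ : 0 < p₁.1 := hL p₁ (by simp)
  have hp₂ : 0 < p₂.1 := hL p₂ (by simp)
  have hp₁i : 0 < p₁.1⁻¹ := inv_pos.mpr hp₁
  have hp₂i : 0 < p₂.1⁻¹ := inv_pos.mpr hp₂
  have hy : prodM z L2 *ᵥ x ≠ 0 := mulVec_ne _ (prodM_unit z hz L2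
    (fun q hq => (hL q (by simp [hq])).ne')) x hx
  have him1 : ((1:ℂ) * ((starRingEnd ℂ) z)⁻¹).im = z.im / normSq z := by
    simp [Complex.inv_im, Complex.normSq_conj, neg_div]
  have hc : 0 < z.im / normSq z * z.im := by
    rw [div_mul_eq_mul_div]
    exact div_pos (mul_self_pos.mpr hz) hns
  have h1im : (fz z 1).im = z.im / normSq z := by
    rw [fz_im, him1, Complex.one_im, zero_add]
  have h2im : ((fz z 1) * ((starRingEnd ℂ) z)⁻¹).im = z.im / normSq z := by
    rw [fz_im2 z hz0, him1, Complex.one_im, zero_div, add_zero]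
  have hstep1 := gen_step z hz0 p₁ hp₁.ne' 1 (gen z p₂ *ᵥ (prodM z L2 *ᵥ x))
  have hstep2 := gen_step z hz0 p₂ hp₂.ne' (fz z 1) (prodM z L2 *ᵥ x)
  have hMV : prodM z (p₁::p₂::L2) *ᵥ x
      = gen z p₁ *ᵥ (gen z p₂ *ᵥ (prodM z L2 *ᵥ x)) := by
    rw [prodM, List.map_cons, List.map_cons, List.prod_cons, List.prod_cons,
      ← Matrix.mulVec_mulVec, ← Matrix.mulVec_mulVec]
    rfl
  have hsc₁ : 0 < sc z p₁ := sc_pos z hz p₁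
  have hsc₂ : 0 < sc z p₂ := sc_pos z hz p₂
  have hsum : 0 < p₂.1 * normSq ((prodM z L2 *ᵥ x) 0)
      + p₂.1⁻¹ * normSq ((prodM z L2 *ᵥ x) 1) := by
    have hne : ¬((prodM z L2 *ᵥ x) 0 = 0 ∧ (prodM z L2 *ᵥ x) 1 = 0) := by
      rintro ⟨ha, hb⟩
      exact hy (funext fun i => by fin_cases i <;> assumption)
    rcases not_and_or.mp hne with h | h
    · exact add_pos_of_pos_of_nonneg (mul_pos hp₂ (normSq_pos.mpr h))
        (mul_nonneg hp₂i.le (normSq_nonneg _))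
    · exact add_pos_of_nonneg_of_pos (mul_nonneg hp₂.le (normSq_nonneg _))
        (mul_pos hp₂i (normSq_pos.mpr h))
  have hd2 : 0 < (p₂.1 * (fz z 1).im * normSq ((prodM z L2 *ᵥ x) 0)
      + ((fz z 1) * ((starRingEnd ℂ) z)⁻¹).im * p₂.1⁻¹ * normSq ((prodM z L2 *ᵥ x) 1)) * z.im := by
    rw [h1im, h2im]
    nlinarith [mul_pos hc hsum]
  -- weak invariants at t₂
  have hI1 : 0 ≤ (fz z (fz z 1)).im * z.im ∧
      0 ≤ ((fz z (fz z 1)) * ((starRingEnd ℂ) z)⁻¹).im * z.im :=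
    fz_inv z hz0 (fz z 1) (by rw [h1im]; exact hc.le) (by rw [h2im]; exact hc.le)
  have hweak := weak z hz L2 (fun q hq => hL q (by simp [hq])) (fz z (fz z 1)) x hI1.1 hI1.2
  have hlen2 : (p₁::p₂::L2).length = L2.length + 2 := by simp
  have hiter : (fz z)^[L2.length] (fz z (fz z 1)) = (fz z)^[(p₁::p₂::L2).length] 1 := by
    rw [hlen2]
    rw [show L2.length + 2 = L2.length + 1 + 1 from rfl, Function.iterate_succ_apply,
      Function.iterate_succ_apply]
  have hscP : scP z (p₁::p₂::L2) = sc z p₁ * (sc z p₂ * scP z L2) := by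
    rw [scP, List.map_cons, List.map_cons, List.prod_cons, List.prod_cons]
    rfl
  calc qf 1 (prodM z (p₁::p₂::L2) *ᵥ x) * z.im
      = sc z p₁ * (qf (fz z 1) (gen z p₂ *ᵥ (prodM z L2 *ᵥ x))
          - p₁.1 * (1:ℂ).im * normSq ((gen z p₂ *ᵥ (prodM z L2 *ᵥ x)) 0)
          - ((1:ℂ) * ((starRingEnd ℂ) z)⁻¹).im * p₁.1⁻¹
            * normSq ((gen z p₂ *ᵥ (prodM z L2 *ᵥ x)) 1)) * z.im := by
        rw [hMV, hstep1]
    _ ≤ sc z p₁ * (qf (fz z 1) (gen z p₂ *ᵥ (prodM z L2 *ᵥ x)) * z.im) := by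
        rw [Complex.one_im, him1]
        have hn1 := normSq_nonneg ((gen z p₂ *ᵥ (prodM z L2 *ᵥ x)) 1)
        nlinarith [mul_nonneg (mul_nonneg (mul_nonneg hsc₁.le hc.le) hp₁i.le) hn1]
    _ < sc z p₁ * (sc z p₂ * (qf (fz z (fz z 1)) (prodM z L2 *ᵥ x) * z.im)) := by
        rw [hstep2]
        have hin : sc z p₂ * (qf (fz z (fz z 1)) (prodM z L2 *ᵥ x)
            - p₂.1 * (fz z 1).im * normSq ((prodM z L2 *ᵥ x) 0)
            - ((fz z 1) * ((starRingEnd ℂ) z)⁻¹).im * p₂.1⁻¹ * normSq ((prodM z L2 *ᵥ x) 1)) * z.im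
            < sc z p₂ * (qf (fz z (fz z 1)) (prodM z L2 *ᵥ x) * z.im) := by
          nlinarith [mul_pos hsc₂ hd2]
        exact mul_lt_mul_of_pos_left hin hsc₁
    _ ≤ sc z p₁ * (sc z p₂ * (scP z L2 * (qf ((fz z)^[L2.length] (fz z (fz z 1))) x * z.im))) := by
        exact mul_le_mul_of_nonneg_left (mul_le_mul_of_nonneg_left hweak hsc₂.le) hsc₁.le
    _ = scP z (p₁::p₂::L2) * (qf ((fz z)^[(p₁::p₂::L2).length] 1) x * z.im) := by
        rw [hiter, hscP]; ring

lemma NEN (b : ℝ) (hb : b ≠ 0) (z : ℂ) (hz0 : z ≠ 0) :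
    NN b z * (Ematrix * NN b z) = (1 - z⁻¹) • Ematrix := by
  have hbc : (b : ℂ) ≠ 0 := by exact_mod_cast hb
  ext i j
  fin_cases i <;> fin_cases j <;>
    simp [NN, Ematrix, Matrix.mul_apply, Fin.sum_univ_two] <;> field_simp <;> ring

lemma gen_flip_id (z : ℂ) (hz : z.im ≠ 0) (p : ℝ × Bool) (hb : p.1 ≠ 0) :
    gen z (flipP p) * (Ematrix * gen z p) = Ematrix := by
  have hz0 : z ≠ 0 := fun h => by simp [h] at hz
  have h1 := one_sub_inv_ne z hz
  have hcore := NEN p.1 hb z hz0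
  have key : ∀ c₁ c₂ : ℂ, c₁ * c₂ = (1 - z⁻¹)⁻¹ →
      (c₁ • NN p.1 z) * (Ematrix * (c₂ • NN p.1 z)) = Ematrix := by
    intro c₁ c₂ hc
    rw [Matrix.mul_smul, Matrix.smul_mul, Matrix.mul_smul, smul_smul, hcore, smul_smul]
    rw [show c₁ * c₂ * (1 - z⁻¹) = 1 from by rw [hc, inv_mul_cancel₀ h1]]
    exact one_smul _ _
  rcases p with ⟨b, e⟩
  cases e <;>
  · simp only [gen, flipP, Bool.not_true, Bool.not_false, reduceIte]
    first
      | exact key _ _ (mul_one _)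
      | exact key _ _ (one_mul _)

lemma theta_id (z : ℂ) (hz : z.im ≠ 0) :
    ∀ L : List (ℝ × Bool), (∀ p ∈ L, p.1 ≠ 0) →
      prodM z ((L.map flipP).reverse) * (Ematrix * prodM z L) = Ematrix := by
  intro L
  induction L with
  | nil => simp [prodM]
  | cons p L ih =>
    intro hL
    have hrev : ((p :: L).map flipP).reverse = (L.map flipP).reverse ++ [flipP p] := by
      simp
    have happ : prodM z ((L.map flipP).reverse ++ [flipP p])
        = prodM z ((L.map flipP).reverse) * gen z (flipP p) := by
      rw [prodM, prodM, List.map_append, List.prod_append]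
      simp [prodM]
    have hcons : prodM z (p :: L) = gen z p * prodM z L := by
      rw [prodM, List.map_cons, List.prod_cons]; rfl
    rw [hrev, happ, hcons]
    calc prodM z ((L.map flipP).reverse) * gen z (flipP p)
          * (Ematrix * (gen z p * prodM z L))
        = prodM z ((L.map flipP).reverse)
          * ((gen z (flipP p) * (Ematrix * gen z p)) * prodM z L) := by
          simp only [Matrix.mul_assoc]
      _ = prodM z ((L.map flipP).reverse) * (Ematrix * prodM z L) := by
          rw [gen_flip_id z hz p (hL p (by simp))]
      _ = Ematrix := ih (fun q hq => hL q (by simp [hq]))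

lemma NDT (b : ℝ) (hb : b ≠ 0) (z : ℂ) (hz0 : z ≠ 0) :
    NN b⁻¹ z * Dmatrix z = Dmatrix z * (NN b z)ᵀ := by
  have hbc : (b : ℂ) ≠ 0 := by exact_mod_cast hb
  have hT : (NN b z)ᵀ = !![1, (b:ℂ); (b:ℂ)⁻¹ * z⁻¹, 1] := by
    rw [NN]
    ext i j
    fin_cases i <;> fin_cases j <;> rfl
  rw [hT]
  ext i j
  fin_cases i <;> fin_cases j <;>
    simp [NN, Dmatrix, Matrix.mul_apply, Fin.sum_univ_two] <;> field_simp

lemma gen_inv_id (z : ℂ) (hz : z.im ≠ 0) (p : ℝ × Bool) (hb : p.1 ≠ 0) :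
    gen z (invP p) * Dmatrix z = Dmatrix z * (gen z p)ᵀ := by
  have hz0 : z ≠ 0 := fun h => by simp [h] at hz
  have hcore := NDT p.1 hb z hz0
  rcases p with ⟨b, e⟩
  cases e <;>
  · simp only [gen, invP, if_true, if_false, Bool.false_eq_true, Matrix.smul_mul, Matrix.mul_smul,
      Matrix.transpose_smul, one_smul]
    rw [hcore]

lemma psi_id (z : ℂ) (hz : z.im ≠ 0) :
    ∀ L : List (ℝ × Bool), (∀ p ∈ L, p.1 ≠ 0) →
      prodM z ((L.map invP).reverse) * Dmatrix z = Dmatrix z * (prodM z L)ᵀ := by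
  intro L
  induction L with
  | nil => simp [prodM]
  | cons p L ih =>
    intro hL
    have hrev : ((p :: L).map invP).reverse = (L.map invP).reverse ++ [invP p] := by
      simp
    have happ : prodM z ((L.map invP).reverse ++ [invP p])
        = prodM z ((L.map invP).reverse) * gen z (invP p) := by
      rw [prodM, prodM, List.map_append, List.prod_append]
      simp [prodM]
    have hcons : prodM z (p :: L) = gen z p * prodM z L := by
      rw [prodM, List.map_cons, List.prod_cons]; rfl
    rw [hrev, happ, hcons]
    calc prodM z ((L.map invP).reverse) * gen z (invP p) * Dmatrix z
        = prodM z ((L.map invP).reverse) * (gen z (invP p) * Dmatrix z) := by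
          simp only [Matrix.mul_assoc]
      _ = prodM z ((L.map invP).reverse) * Dmatrix z * (gen z p)ᵀ := by
          rw [gen_inv_id z hz p (hL p (by simp))]
          simp only [Matrix.mul_assoc]
      _ = Dmatrix z * (prodM z L)ᵀ * (gen z p)ᵀ := by
          rw [ih (fun q hq => hL q (by simp [hq]))]
      _ = Dmatrix z * (gen z p * prodM z L)ᵀ := by
          rw [Matrix.transpose_mul]
          simp only [Matrix.mul_assoc]

lemma main (z : ℂ) (hz : z.im ≠ 0) (L : List (ℝ × Bool)) (hL : ∀ p ∈ L, 0 < p.1)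
    (hlen : 2 ≤ L.length) (hsc : scP z ((L.map flipP).reverse) = scP z L)
    (x : Fin 2 → ℂ) (hx : x ≠ 0) (w : ℂ)
    (heig : prodM z L *ᵥ x = w • x) :
    (normSq w * normSq w - 1) * (qf 1 x * z.im) < 0 := by
  have hz0 : z ≠ 0 := fun h => by simp [h] at hz
  have hLne : ∀ p ∈ L, p.1 ≠ 0 := fun p hp => (hL p hp).ne'
  have hunit := prodM_unit z hz L hLne
  have hw : w ≠ 0 := by
    intro h
    rw [h, zero_smul] at heig
    exact mulVec_ne _ hunit x hx heig
  have hEunit : IsUnit Ematrix := by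
    rw [Matrix.isUnit_iff_isUnit_det]
    rw [Ematrix, Matrix.det_fin_two_of]
    simp
  have hEx : Ematrix *ᵥ x ≠ 0 := mulVec_ne _ hEunit x hx
  -- Θ eigenvector relation
  have hΘL : ∀ p ∈ (L.map flipP).reverse, 0 < p.1 := by
    intro p hp
    rw [List.mem_reverse, List.mem_map] at hp
    obtain ⟨q, hq, rfl⟩ := hp
    exact hL q hq
  have hΘlen : ((L.map flipP).reverse).length = L.length := by simp
  have hΘeig : prodM z ((L.map flipP).reverse) *ᵥ (Ematrix *ᵥ x)
      = w⁻¹ • (Ematrix *ᵥ x) := by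
    have h := theta_id z hz L hLne
    have h2 : (prodM z ((L.map flipP).reverse) * (Ematrix * prodM z L)) *ᵥ x
        = Ematrix *ᵥ x := by rw [h]
    rw [← Matrix.mulVec_mulVec, ← Matrix.mulVec_mulVec, heig, Matrix.mulVec_smul] at h2
    have h3 : prodM z ((L.map flipP).reverse) *ᵥ (w • (Ematrix *ᵥ x))
        = w • (prodM z ((L.map flipP).reverse) *ᵥ (Ematrix *ᵥ x)) :=
      Matrix.mulVec_smul _ _ _
    rw [h3] at h2
    calc prodM z ((L.map flipP).reverse) *ᵥ (Ematrix *ᵥ x)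
        = w⁻¹ • (w • (prodM z ((L.map flipP).reverse) *ᵥ (Ematrix *ᵥ x))) := by
          rw [smul_smul, inv_mul_cancel₀ hw, one_smul]
      _ = w⁻¹ • (Ematrix *ᵥ x) := by rw [h2]
  have s1 := strict z hz L hL hlen x hx
  have s2 := strict z hz ((L.map flipP).reverse) hΘL (by rw [hΘlen]; exact hlen)
    (Ematrix *ᵥ x) hEx
  rw [heig, qf_smul] at s1
  rw [hΘeig, qf_smul, hΘlen, hsc, qf_E, qf_E, Complex.normSq_inv] at s2
  set S := normSq w with hS
  set Q := qf 1 x with hQ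
  set T := qf ((fz z)^[L.length] 1) x with hT
  have hSpos : 0 < S := normSq_pos.mpr hw
  -- s1 : S * Q * z.im < scP z L * (T * z.im)
  -- s2 : S⁻¹ * -Q * z.im < scP z L * (-T * z.im)
  have hkey : S * Q * z.im - S⁻¹ * Q * z.im < 0 := by nlinarith [s1, s2]
  have hid : (S * S - 1) * (Q * z.im) = S * (S * Q * z.im - S⁻¹ * Q * z.im) := by
    field_simp
  rw [hid]
  exact mul_neg_of_pos_of_neg hSpos hkey

lemma sc_bool (z : ℂ) (p q : ℝ × Bool) (h : p.2 = q.2) : sc z p = sc z q := by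
  simp [sc, h]

lemma scP_reverse (z : ℂ) (l : List (ℝ × Bool)) : scP z l.reverse = scP z l := by
  rw [scP, scP, List.map_reverse, List.prod_reverse]

lemma scP_append (z : ℂ) (a b : List (ℝ × Bool)) :
    scP z (a ++ b) = scP z a * scP z b := by
  rw [scP, scP, scP, List.map_append, List.prod_append]

lemma scP_map_eq (z : ℂ) (f g : (ℝ × Bool) → (ℝ × Bool)) (hfg : ∀ p, (f p).2 = (g p).2)
    (l : List (ℝ × Bool)) : scP z (l.map f) = scP z (l.map g) := by
  rw [scP, scP, List.map_map, List.map_map]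
  congr 1
  apply List.map_congr_left
  intro p _
  exact sc_bool z (f p) (g p) (hfg p)

section Assembly

variable (α β : ℕ → ℝ) (z : ℂ)

noncomputable def pairF (i : ℕ) : List (ℝ × Bool) := [(α (i+1), false), (β (i+1), true)]

lemma Phi_eq_aux (l : List ℕ) :
    ((l.map (fun i => phiOdd (α (i + 1)) z * phiEven (β (i + 1)) z)).prod
      = prodM z (l.flatMap (pairF α β))) := by
  induction l with
  | nil => simp [prodM]
  | cons i l ih =>
    rw [List.map_cons, List.prod_cons, List.flatMap_cons, prodM, List.map_append,
      List.prod_append, ← prodM, ← prodM, ih]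
    congr 1
    have ho : phiOdd ((α (i+1) : ℝ) : ℂ) z = gen z (α (i+1), false) := by
      simp [phiOdd, gen, NN]
    have he : phiEven ((β (i+1) : ℝ) : ℂ) z = gen z (β (i+1), true) := by
      simp [phiEven, gen, NN]
    rw [ho, he, pairF, prodM]
    simp

lemma Phi_eq (ℓ : ℕ) : Phi ℓ α β z = prodM z ((List.range ℓ).flatMap (pairF α β)) := by
  rw [Phi, Phi_eq_aux]

lemma flat_length (l : List ℕ) : (l.flatMap (pairF α β)).length = 2 * l.length := by
  induction l with
  | nil => simp
  | cons i l ih => rw [List.flatMap_cons, List.length_append, ih]; simp [pairF]; ring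

lemma flat_pos (hα : ∀ i, 0 < α i) (hβ : ∀ i, 0 < β i) (l : List ℕ) :
    ∀ p ∈ l.flatMap (pairF α β), 0 < p.1 := by
  intro p hp
  rw [List.mem_flatMap] at hp
  obtain ⟨i, _, hpi⟩ := hp
  simp only [pairF, List.mem_cons, List.mem_singleton, List.not_mem_nil, or_false] at hpi
  rcases hpi with rfl | rfl
  · exact hα _
  · exact hβ _

lemma flat_sc (l : List ℕ) :
    scP z ((l.flatMap (pairF α β)).map flipP) = scP z (l.flatMap (pairF α β)) := by
  induction l with
  | nil => simp [scP]
  | cons i l ih =>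
    rw [List.flatMap_cons, List.map_append, scP_append, scP_append, ih]
    congr 1
    simp [pairF, scP, flipP, sc, mul_comm]

end Assembly

end Aztec7

/-- For z ∉ ℝ, if u is a nonzero right eigenvector and v a nonzero left eigenvector
of Φ(z) for the same eigenvalue w, then Im(u₁ conj(u₂)) · Im(v₁ conj(v₂)/z) > 0. -/
theorem stmt7 (ℓ : ℕ) (hℓ : 1 ≤ ℓ) (α β : ℕ → ℝ)
    (hα : ∀ i, 0 < α i) (hβ : ∀ i, 0 < β i)
    (z : ℂ) (hz : z.im ≠ 0) (w : ℂ) (u v : Fin 2 → ℂ) (hu : u ≠ 0) (hv : v ≠ 0)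
    (hu_eig : Phi ℓ α β z *ᵥ u = w • u)
    (hv_eig : v ᵥ* Phi ℓ α β z = w • v) :
    0 < (u 0 * (starRingEnd ℂ) (u 1)).im * ((v 0 * (starRingEnd ℂ) (v 1)) / z).im := by
  classical
  open Aztec7 in
  have hz0 : z ≠ 0 := fun h => by simp [h] at hz
  set LPhi := (List.range ℓ).flatMap (pairF α β) with hLPhi
  have hPhi : Phi ℓ α β z = prodM z LPhi := Phi_eq α β z ℓ
  have hLpos : ∀ p ∈ LPhi, 0 < p.1 := flat_pos α β hα hβ _
  have hLlen : 2 ≤ LPhi.length := by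
    rw [hLPhi, flat_length]
    simpa using Nat.mul_le_mul_left 2 hℓ
  have hLsc : scP z ((LPhi.map flipP).reverse) = scP z LPhi := by
    rw [scP_reverse, hLPhi, flat_sc]
  -- right eigenvector side
  have hA := main z hz LPhi hLpos hLlen hLsc u hu w (by rw [← hPhi]; exact hu_eig)
  -- left eigenvector side via Ψ
  set LPsi := (LPhi.map invP).reverse with hLPsi
  have hPsipos : ∀ p ∈ LPsi, 0 < p.1 := by
    intro p hp
    rw [hLPsi, List.mem_reverse, List.mem_map] at hp
    obtain ⟨q, hq, rfl⟩ := hp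
    exact inv_pos.mpr (hLpos q hq)
  have hPsilen : 2 ≤ LPsi.length := by
    rw [hLPsi]
    simpa using hLlen
  have hPsisc : scP z ((LPsi.map flipP).reverse) = scP z LPsi := by
    rw [hLPsi, List.map_reverse, List.reverse_reverse, scP_reverse, List.map_map]
    rw [scP_map_eq z (flipP ∘ invP) flipP (fun p => rfl) LPhi,
      scP_map_eq z invP id (fun p => rfl) LPhi, List.map_id, hLPhi, flat_sc]
  have hDunit : IsUnit (Dmatrix z) := by
    rw [Matrix.isUnit_iff_isUnit_det, Dmatrix, Matrix.det_fin_two_of]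
    simpa using hz0
  have hDv : Dmatrix z *ᵥ v ≠ 0 := mulVec_ne _ hDunit v hv
  have hPsieig : prodM z LPsi *ᵥ (Dmatrix z *ᵥ v) = w • (Dmatrix z *ᵥ v) := by
    have hT : (Phi ℓ α β z)ᵀ *ᵥ v = w • v := by
      rw [Matrix.mulVec_transpose, hv_eig]
    have h := psi_id z hz LPhi (fun p hp => (hLpos p hp).ne')
    rw [Matrix.mulVec_mulVec, hLPsi, h, ← Matrix.mulVec_mulVec, ← hPhi, hT,
      Matrix.mulVec_smul]
  have hB := main z hz LPsi hPsipos hPsilen hPsisc (Dmatrix z *ᵥ v) hDv w hPsieig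
  -- final numeric combination
  set S := Complex.normSq w with hS
  have hQ1 : qf 1 u = (u 0 * (starRingEnd ℂ) (u 1)).im := by simp [qf]
  have hDv0 : (Dmatrix z *ᵥ v) 0 = v 0 := by
    simp [Dmatrix, Matrix.mulVec, dotProduct, Fin.sum_univ_two]
  have hDv1 : (Dmatrix z *ᵥ v) 1 = z * v 1 := by
    simp [Dmatrix, Matrix.mulVec, dotProduct, Fin.sum_univ_two]
  have hQ2 : qf 1 (Dmatrix z *ᵥ v)
      = ((v 0 * (starRingEnd ℂ) (v 1)) * (starRingEnd ℂ) z).im := by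
    rw [qf, hDv0, hDv1]
    rw [_root_.map_one, one_mul, _root_.map_mul]
    ring_nf
  have hdiv : ((v 0 * (starRingEnd ℂ) (v 1)) / z).im
      = ((v 0 * (starRingEnd ℂ) (v 1)) * (starRingEnd ℂ) z).im * (Complex.normSq z)⁻¹ := by
    rw [div_eq_mul_inv, Complex.inv_def, ← mul_assoc, Complex.mul_im]
    simp
  rw [hQ1] at hA
  rw [hQ2] at hB
  set Q1 := (u 0 * (starRingEnd ℂ) (u 1)).im with hQ1d
  set Q2 := ((v 0 * (starRingEnd ℂ) (v 1)) * (starRingEnd ℂ) z).im with hQ2d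
  have hSne : S * S - 1 ≠ 0 := by
    intro h
    rw [h] at hA
    simp at hA
  have hprod : 0 < ((S * S - 1) * (Q1 * z.im)) * ((S * S - 1) * (Q2 * z.im)) :=
    mul_pos_of_neg_of_neg hA hB
  have hee : ((S * S - 1) * (Q1 * z.im)) * ((S * S - 1) * (Q2 * z.im))
      = ((S * S - 1)^2 * z.im^2) * (Q1 * Q2) := by ring
  rw [hee] at hprod
  have hc : 0 < (S * S - 1)^2 * z.im^2 :=
    mul_pos (pow_two_pos_of_ne_zero hSne) (pow_two_pos_of_ne_zero hz)
  have hq : 0 < Q1 * Q2 := by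
    by_contra h
    push_neg at h
    nlinarith
  rw [hdiv]
  calc (0:ℝ) < (Q1 * Q2) * (Complex.normSq z)⁻¹ :=
        mul_pos hq (inv_pos.mpr (Complex.normSq_pos.mpr hz0))
    _ = Q1 * (Q2 * (Complex.normSq z)⁻¹) := by ring
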